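/- Let f₁, …, f_N : ℝ^d → ℝ be differentiable, each with L-Lipschitz gradient, set f = (1/N) Σ_{i=1}^N f_i, and assume ∇f is L-Lipschitz. Let 0 < ε, G ≥ 0, β₁ ∈ [0,1), γ ≥ 0, ρ ≥ 0, λ₁, λ₂, λ₃ > 0. Let x, s, m, η, η₀ ∈ ℝ^d with s ≠ 0, ∇f(x) ≠ 0, ‖m‖∞ ≤ G, and 0 ≤ (η)_j ≤ 1/ε and 0 ≤ (η₀)_j ≤ 1/ε for every coordinate j, and set z = x − (γ β₁/(1 − β₁)) m ⊙ η₀. Then ⟨∇f(z) − ∇f(x), −(γ/N) Σ_{i=1}^N ∇f_i(x + ρ s/‖s‖) ⊙ η⟩ ≤ (γ³ L² β₁²/(2ε(1 − β₁)²)) (1/λ₁² + 1/λ₂² + 1/λ₃²) (d G²/ε²) + (γ λ₁²/2) ‖∇f(x) ⊙ √η‖² + (γ L² ρ²/(2ε)) (λ₂² + 4 λ₃²). -/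

import Mathlib

open scoped RealInnerProductSpace

/-- The coordinatewise (Hadamard) product on `EuclideanSpace ℝ (Fin d)`. -/
noncomputable def had {d : ℕ} (x y : EuclideanSpace ℝ (Fin d)) : EuclideanSpace ℝ (Fin d) :=
  (WithLp.equiv 2 (Fin d → ℝ)).symm (fun j => x j * y j)

/-- The coordinatewise square root on `EuclideanSpace ℝ (Fin d)`. -/
noncomputable def vsqrt {d : ℕ} (x : EuclideanSpace ℝ (Fin d)) : EuclideanSpace ℝ (Fin d) :=
  (WithLp.equiv 2 (Fin d → ℝ)).symm (fun j => Real.sqrt (x j))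

/-- Scalar Young-type inequality. -/
lemma young_scalar (a b e lam : ℝ) (he : 0 ≤ e) (hl : 0 < lam) :
    -(a * b * e) ≤ (1 / (2 * lam ^ 2)) * a ^ 2 * e + (lam ^ 2 / 2) * b ^ 2 * e := by
  rw [← sub_nonneg]
  have expand : (1 / (2 * lam ^ 2)) * a ^ 2 * e + (lam ^ 2 / 2) * b ^ 2 * e - -(a * b * e)
      = ((a + lam ^ 2 * b) ^ 2 * e) / (2 * lam ^ 2) := by
    field_simp
    ring
  rw [expand]
  exact div_nonneg (mul_nonneg (sq_nonneg _) he) (by positivity)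

set_option maxHeartbeats 1000000 in
/-- Full-batch momentum cross-term bound of the AdaSAM analysis: with `f = (1/N) Σ f_i`,
`∇f_i` and `∇f` `L`-Lipschitz, `‖m‖∞ ≤ G`, `η, η₀` coordinatewise in `[0, 1/ε]`, and
`z = x − (γβ₁/(1−β₁)) m ⊙ η₀`, one has
`⟨∇f(z) − ∇f(x), −(γ/N) Σ_i ∇f_i(x + ρs/‖s‖) ⊙ η⟩
  ≤ (γ³L²β₁²/(2ε(1−β₁)²))(1/λ₁² + 1/λ₂² + 1/λ₃²)(dG²/ε²)
    + (γλ₁²/2)‖∇f(x) ⊙ √η‖² + (γL²ρ²/(2ε))(λ₂² + 4λ₃²)`. -/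
theorem adasam_cross_term_bound {d N : ℕ} (hd : 1 ≤ d) (hN : 1 ≤ N)
    (fi : Fin N → EuclideanSpace ℝ (Fin d) → ℝ)
    (f : EuclideanSpace ℝ (Fin d) → ℝ)
    (hfdef : ∀ y, f y = (1 / (N : ℝ)) * ∑ i, fi i y)
    (L ε G β₁ γ ρ lam₁ lam₂ lam₃ : ℝ)
    (hf : Differentiable ℝ f)
    (hfi : ∀ i, Differentiable ℝ (fi i))
    (hfiL : ∀ i, ∀ u v, ‖gradient (fi i) u - gradient (fi i) v‖ ≤ L * ‖u - v‖)
    (hfL : ∀ u v, ‖gradient f u - gradient f v‖ ≤ L * ‖u - v‖)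
    (hε : 0 < ε) (hG : 0 ≤ G) (hβ₁ : β₁ ∈ Set.Ico (0 : ℝ) 1) (hγ : 0 ≤ γ) (hρ : 0 ≤ ρ)
    (hlam₁ : 0 < lam₁) (hlam₂ : 0 < lam₂) (hlam₃ : 0 < lam₃)
    (x s m η η₀ : EuclideanSpace ℝ (Fin d))
    (hs : s ≠ 0) (hx : gradient f x ≠ 0)
    (hm : ∀ j, |m j| ≤ G)
    (hη : ∀ j, 0 ≤ η j ∧ η j ≤ 1 / ε)
    (hη₀ : ∀ j, 0 ≤ η₀ j ∧ η₀ j ≤ 1 / ε)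
    (z : EuclideanSpace ℝ (Fin d))
    (hz : z = x - (γ * β₁ / (1 - β₁)) • had m η₀) :
    ⟪gradient f z - gradient f x,
        -((γ / (N : ℝ)) • ∑ i, had (gradient (fi i) (x + (ρ / ‖s‖) • s)) η)⟫
      ≤ (γ ^ 3 * L ^ 2 * β₁ ^ 2 / (2 * ε * (1 - β₁) ^ 2))
          * (1 / lam₁ ^ 2 + 1 / lam₂ ^ 2 + 1 / lam₃ ^ 2) * ((d : ℝ) * G ^ 2 / ε ^ 2)
        + (γ * lam₁ ^ 2 / 2) * ‖had (gradient f x) (vsqrt η)‖ ^ 2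
        + (γ * L ^ 2 * ρ ^ 2 / (2 * ε)) * (lam₂ ^ 2 + 4 * lam₃ ^ 2) := by
  obtain ⟨hβ0, hβlt⟩ := hβ₁
  have h1β : (0:ℝ) < 1 - β₁ := by linarith
  have hN0 : (N:ℝ) ≠ 0 := Nat.cast_ne_zero.mpr (by omega)
  have hεne : ε ≠ 0 := ne_of_gt hε
  have hsnorm : (0:ℝ) < ‖s‖ := norm_pos_iff.mpr hs
  -- gradient of f is average of gradients
  have hgrad : ∀ u, gradient f u = (1 / (N : ℝ)) • ∑ i, gradient (fi i) u := by
    intro u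
    have hfe : f = fun v => (1 / (N : ℝ)) * ∑ i, fi i v := funext hfdef
    have key : HasGradientAt (fun v => (1 / (N : ℝ)) * ∑ i, fi i v)
        ((1 / (N : ℝ)) • ∑ i, gradient (fi i) u) u := by
      rw [hasGradientAt_iff_hasFDerivAt]
      have h1 : HasFDerivAt (fun v => ∑ i, fi i v)
          (∑ i, (InnerProductSpace.toDual ℝ (EuclideanSpace ℝ (Fin d))) (gradient (fi i) u)) u := by
        apply HasFDerivAt.fun_sum
        intro i _
        have h := ((hfi i) u).hasGradientAt
        rw [hasGradientAt_iff_hasFDerivAt] at h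
        exact h
      have h2 := h1.const_mul (1 / (N : ℝ))
      convert h2 using 1
      · rfl
      simp [map_smul, map_sum]
    rw [hfe]
    exact key.gradient
  set y : EuclideanSpace ℝ (Fin d) := x + (ρ / ‖s‖) • s with hy
  set Δ : EuclideanSpace ℝ (Fin d) := gradient f z - gradient f x with hΔ
  set g : EuclideanSpace ℝ (Fin d) := gradient f y with hg
  set w : EuclideanSpace ℝ (Fin d) := g - gradient f x with hw
  -- basic pointwise facts
  have had_apply : ∀ (u v : EuclideanSpace ℝ (Fin d)) j, had u v j = u j * v j := fun _ _ _ => rfl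
  have hsum_apply : ∀ (F : Fin N → EuclideanSpace ℝ (Fin d)) j, (∑ i, F i) j = ∑ i, F i j :=
    fun F j => by rw [WithLp.ofLp_sum, Finset.sum_apply]
  have hhad_sum : had (∑ i, gradient (fi i) y) η = ∑ i, had (gradient (fi i) y) η := by
    ext j
    rw [had_apply, hsum_apply, hsum_apply, Finset.sum_mul]
    exact Finset.sum_congr rfl (fun i _ => rfl)
  have hNg : ∑ i, gradient (fi i) y = (N:ℝ) • g := by
    rw [hg, hgrad y, smul_smul]
    rw [mul_one_div, div_self hN0, one_smul]
  have hhadsmul : ∀ (c : ℝ) (u : EuclideanSpace ℝ (Fin d)), had (c • u) η = c • had u η := by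
    intro c u
    ext j
    simp [had, mul_assoc]
  -- rewrite LHS as a scalar sum
  have hLHS : ⟪Δ, -((γ / (N : ℝ)) • ∑ i, had (gradient (fi i) y) η)⟫
      = ∑ j, -γ * (Δ j * (g j * η j)) := by
    rw [← hhad_sum, hNg, hhadsmul, inner_neg_right, real_inner_smul_right, real_inner_smul_right]
    rw [PiLp.inner_apply]
    simp only [RCLike.inner_apply, conj_trivial, had_apply]
    rw [Finset.mul_sum, Finset.mul_sum, ← Finset.sum_neg_distrib]
    apply Finset.sum_congr rfl
    intro j _
    field_simp
  -- per-coordinate bound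
  set A : ℝ := ∑ j, (Δ j) ^ 2 * η j with hA_def
  set P : ℝ := ∑ j, (gradient f x j) ^ 2 * η j with hP_def
  set W : ℝ := ∑ j, (w j) ^ 2 * η j with hW_def
  have hgj : ∀ j, g j = gradient f x j + w j := by
    intro j
    simp [hw]
  have hj : ∀ j, -γ * (Δ j * (g j * η j))
      ≤ γ * (((1 / (2 * lam₁ ^ 2)) * (Δ j) ^ 2 + (1 / (2 * lam₂ ^ 2)) * (Δ j) ^ 2
          + (lam₁ ^ 2 / 2) * (gradient f x j) ^ 2 + (lam₂ ^ 2 / 2) * (w j) ^ 2) * η j) := by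
    intro j
    have h1 := young_scalar (Δ j) (gradient f x j) (η j) lam₁ (hη j).1 hlam₁
    have h2 := young_scalar (Δ j) (w j) (η j) lam₂ (hη j).1 hlam₂
    have key : -(Δ j * (g j * η j))
        ≤ ((1 / (2 * lam₁ ^ 2)) * (Δ j) ^ 2 + (1 / (2 * lam₂ ^ 2)) * (Δ j) ^ 2
          + (lam₁ ^ 2 / 2) * (gradient f x j) ^ 2 + (lam₂ ^ 2 / 2) * (w j) ^ 2) * η j := by
      rw [hgj j]
      linarith [h1, h2]
    calc -γ * (Δ j * (g j * η j)) = γ * (-(Δ j * (g j * η j))) := by ring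
      _ ≤ γ * (((1 / (2 * lam₁ ^ 2)) * (Δ j) ^ 2 + (1 / (2 * lam₂ ^ 2)) * (Δ j) ^ 2
          + (lam₁ ^ 2 / 2) * (gradient f x j) ^ 2 + (lam₂ ^ 2 / 2) * (w j) ^ 2) * η j) :=
        mul_le_mul_of_nonneg_left key hγ
  -- sum bound
  have hsum_le : ∑ j, -γ * (Δ j * (g j * η j))
      ≤ γ * ((1 / (2 * lam₁ ^ 2) + 1 / (2 * lam₂ ^ 2)) * A + (lam₁ ^ 2 / 2) * P
          + (lam₂ ^ 2 / 2) * W) := by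
    have step := Finset.sum_le_sum (fun j (_ : j ∈ Finset.univ) => hj j)
    have heq : γ * ((1 / (2 * lam₁ ^ 2) + 1 / (2 * lam₂ ^ 2)) * A + (lam₁ ^ 2 / 2) * P
          + (lam₂ ^ 2 / 2) * W)
        = ∑ j, γ * (((1 / (2 * lam₁ ^ 2)) * (Δ j) ^ 2 + (1 / (2 * lam₂ ^ 2)) * (Δ j) ^ 2
          + (lam₁ ^ 2 / 2) * (gradient f x j) ^ 2 + (lam₂ ^ 2 / 2) * (w j) ^ 2) * η j) := by
      rw [hA_def, hP_def, hW_def]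
      rw [show γ * ((1 / (2 * lam₁ ^ 2) + 1 / (2 * lam₂ ^ 2)) * (∑ j, (Δ j) ^ 2 * η j)
            + (lam₁ ^ 2 / 2) * (∑ j, (gradient f x j) ^ 2 * η j)
            + (lam₂ ^ 2 / 2) * (∑ j, (w j) ^ 2 * η j))
          = (γ * (1 / (2 * lam₁ ^ 2) + 1 / (2 * lam₂ ^ 2))) * (∑ j, (Δ j) ^ 2 * η j)
            + (γ * (lam₁ ^ 2 / 2)) * (∑ j, (gradient f x j) ^ 2 * η j)
            + (γ * (lam₂ ^ 2 / 2)) * (∑ j, (w j) ^ 2 * η j) from by ring]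
      rw [Finset.mul_sum, Finset.mul_sum, Finset.mul_sum, ← Finset.sum_add_distrib,
        ← Finset.sum_add_distrib]
      apply Finset.sum_congr rfl
      intro j _
      ring
    rw [heq]
    exact step
  -- norm squared as sum of squares
  have hnormsq : ∀ v : EuclideanSpace ℝ (Fin d), ‖v‖ ^ 2 = ∑ j, (v j) ^ 2 := by
    intro v
    rw [← real_inner_self_eq_norm_sq, PiLp.inner_apply]
    simp [RCLike.inner_apply, sq]
  -- generic bound  ∑ v_j² η_j ≤ ‖v‖²/ε
  have hQle : ∀ v : EuclideanSpace ℝ (Fin d), (∑ j, (v j) ^ 2 * η j) ≤ (1 / ε) * ‖v‖ ^ 2 := by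
    intro v
    rw [hnormsq, Finset.mul_sum]
    apply Finset.sum_le_sum
    intro j _
    calc (v j) ^ 2 * η j ≤ (v j) ^ 2 * (1 / ε) :=
          mul_le_mul_of_nonneg_left (hη j).2 (sq_nonneg _)
      _ = 1 / ε * (v j) ^ 2 := mul_comm _ _
  -- bound on A
  have hΔn : ‖Δ‖ ≤ L * ‖z - x‖ := hfL z x
  have hzx : ‖z - x‖ ^ 2 ≤ γ ^ 2 * β₁ ^ 2 / (1 - β₁) ^ 2 * ((d : ℝ) * G ^ 2 / ε ^ 2) := by
    rw [hz]
    rw [show x - (γ * β₁ / (1 - β₁)) • had m η₀ - x = -((γ * β₁ / (1 - β₁)) • had m η₀) from by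
      abel]
    rw [norm_neg, norm_smul, Real.norm_eq_abs]
    have hcoef : |γ * β₁ / (1 - β₁)| = γ * β₁ / (1 - β₁) := by
      rw [abs_of_nonneg]
      positivity
    rw [hcoef, mul_pow, hnormsq]
    have hsumb : (∑ j, ((had m η₀) j) ^ 2) ≤ (d : ℝ) * (G ^ 2 / ε ^ 2) := by
      calc (∑ j, ((had m η₀) j) ^ 2) ≤ ∑ _j : Fin d, (G ^ 2 / ε ^ 2) := by
            apply Finset.sum_le_sum
            intro j _
            rw [had_apply, mul_pow]
            have h1 : (m j) ^ 2 ≤ G ^ 2 := by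
              have h := pow_le_pow_left₀ (abs_nonneg (m j)) (hm j) 2
              rwa [sq_abs] at h
            have h2 : (η₀ j) ^ 2 ≤ (1 / ε) ^ 2 :=
              pow_le_pow_left₀ (hη₀ j).1 (hη₀ j).2 2
            have h3 : (0:ℝ) ≤ (η₀ j) ^ 2 := sq_nonneg _
            have h4 : (0:ℝ) ≤ G ^ 2 := sq_nonneg _
            calc (m j) ^ 2 * (η₀ j) ^ 2 ≤ G ^ 2 * (1 / ε) ^ 2 :=
                  mul_le_mul h1 h2 h3 h4
              _ = G ^ 2 / ε ^ 2 := by field_simp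
        _ = (d : ℝ) * (G ^ 2 / ε ^ 2) := by
            rw [Finset.sum_const, Finset.card_univ, Fintype.card_fin, nsmul_eq_mul]
    calc (γ * β₁ / (1 - β₁)) ^ 2 * (∑ j, ((had m η₀) j) ^ 2)
        ≤ (γ * β₁ / (1 - β₁)) ^ 2 * ((d : ℝ) * (G ^ 2 / ε ^ 2)) := by
          apply mul_le_mul_of_nonneg_left hsumb (by positivity)
      _ = γ ^ 2 * β₁ ^ 2 / (1 - β₁) ^ 2 * ((d : ℝ) * G ^ 2 / ε ^ 2) := by
          rw [div_pow, mul_pow, mul_div_assoc]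
          congr 1
          exact (mul_div_assoc ((d : ℝ)) _ _).symm
  have hΔsq : ‖Δ‖ ^ 2 ≤ L ^ 2 * ‖z - x‖ ^ 2 := by
    have h := pow_le_pow_left₀ (norm_nonneg Δ) hΔn 2
    rwa [mul_pow] at h
  have hA : A ≤ γ ^ 2 * L ^ 2 * β₁ ^ 2 * (d : ℝ) * G ^ 2 / ((1 - β₁) ^ 2 * ε ^ 3) := by
    calc A ≤ (1 / ε) * ‖Δ‖ ^ 2 := hQle Δ
      _ ≤ (1 / ε) * (L ^ 2 * ‖z - x‖ ^ 2) := by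
          apply mul_le_mul_of_nonneg_left hΔsq (by positivity)
      _ ≤ (1 / ε) * (L ^ 2 * (γ ^ 2 * β₁ ^ 2 / (1 - β₁) ^ 2 * ((d : ℝ) * G ^ 2 / ε ^ 2))) := by
          apply mul_le_mul_of_nonneg_left _ (by positivity)
          exact mul_le_mul_of_nonneg_left hzx (sq_nonneg L)
      _ = γ ^ 2 * L ^ 2 * β₁ ^ 2 * (d : ℝ) * G ^ 2 / ((1 - β₁) ^ 2 * ε ^ 3) := by
          field_simp
  -- bound on W
  have hyx : ‖y - x‖ = ρ := by
    rw [hy, add_sub_cancel_left, norm_smul, Real.norm_eq_abs]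
    rw [abs_of_nonneg (by positivity)]
    field_simp
  have hwn : ‖w‖ ≤ L * ρ := by
    have := hfL y x
    rw [hyx] at this
    exact this
  have hwsq : ‖w‖ ^ 2 ≤ L ^ 2 * ρ ^ 2 := by
    have h := pow_le_pow_left₀ (norm_nonneg w) hwn 2
    rwa [mul_pow] at h
  have hW : W ≤ L ^ 2 * ρ ^ 2 / ε := by
    calc W ≤ (1 / ε) * ‖w‖ ^ 2 := hQle w
      _ ≤ (1 / ε) * (L ^ 2 * ρ ^ 2) := mul_le_mul_of_nonneg_left hwsq (by positivity)
      _ = L ^ 2 * ρ ^ 2 / ε := by ring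
  -- P equality
  have hP : ‖had (gradient f x) (vsqrt η)‖ ^ 2 = P := by
    rw [hnormsq, hP_def]
    apply Finset.sum_congr rfl
    intro j _
    have : (had (gradient f x) (vsqrt η)) j = gradient f x j * Real.sqrt (η j) := rfl
    rw [this, mul_pow, Real.sq_sqrt (hη j).1]
  -- final assembly
  rw [hLHS, hP]
  have hL2 : (0:ℝ) ≤ L ^ 2 := sq_nonneg L
  have hγ3 : (0:ℝ) ≤ γ ^ 3 := pow_nonneg hγ 3
  have t1 : γ * ((1 / (2 * lam₁ ^ 2) + 1 / (2 * lam₂ ^ 2)) * A)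
      ≤ (γ ^ 3 * L ^ 2 * β₁ ^ 2 / (2 * ε * (1 - β₁) ^ 2)) * (1 / lam₁ ^ 2 + 1 / lam₂ ^ 2)
        * ((d : ℝ) * G ^ 2 / ε ^ 2) := by
    have heq : γ * ((1 / (2 * lam₁ ^ 2) + 1 / (2 * lam₂ ^ 2))
          * (γ ^ 2 * L ^ 2 * β₁ ^ 2 * (d : ℝ) * G ^ 2 / ((1 - β₁) ^ 2 * ε ^ 3)))
        = (γ ^ 3 * L ^ 2 * β₁ ^ 2 / (2 * ε * (1 - β₁) ^ 2)) * (1 / lam₁ ^ 2 + 1 / lam₂ ^ 2)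
          * ((d : ℝ) * G ^ 2 / ε ^ 2) := by
      field_simp
    rw [← heq]
    apply mul_le_mul_of_nonneg_left _ hγ
    apply mul_le_mul_of_nonneg_left hA (by positivity)
  have t2 : γ * ((lam₂ ^ 2 / 2) * W) ≤ (γ * L ^ 2 * ρ ^ 2 / (2 * ε)) * lam₂ ^ 2 := by
    have heq : γ * ((lam₂ ^ 2 / 2) * (L ^ 2 * ρ ^ 2 / ε))
        = (γ * L ^ 2 * ρ ^ 2 / (2 * ε)) * lam₂ ^ 2 := by
      field_simp
    rw [← heq]
    apply mul_le_mul_of_nonneg_left _ hγ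
    apply mul_le_mul_of_nonneg_left hW (by positivity)
  have t3 : (0:ℝ) ≤ (γ ^ 3 * L ^ 2 * β₁ ^ 2 / (2 * ε * (1 - β₁) ^ 2)) * (1 / lam₃ ^ 2)
      * ((d : ℝ) * G ^ 2 / ε ^ 2) := by
    apply mul_nonneg
    apply mul_nonneg
    · apply div_nonneg
      · exact mul_nonneg (mul_nonneg hγ3 hL2) (sq_nonneg β₁)
      · positivity
    · positivity
    · positivity
  have t4 : (0:ℝ) ≤ (γ * L ^ 2 * ρ ^ 2 / (2 * ε)) * (4 * lam₃ ^ 2) := by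
    apply mul_nonneg
    · exact div_nonneg (mul_nonneg (mul_nonneg hγ hL2) (sq_nonneg ρ)) (by positivity)
    · positivity
  have hmid : γ * ((lam₁ ^ 2 / 2) * P) = (γ * lam₁ ^ 2 / 2) * P := by ring
  have hsplit1 : (γ ^ 3 * L ^ 2 * β₁ ^ 2 / (2 * ε * (1 - β₁) ^ 2))
        * (1 / lam₁ ^ 2 + 1 / lam₂ ^ 2 + 1 / lam₃ ^ 2) * ((d : ℝ) * G ^ 2 / ε ^ 2)
      = (γ ^ 3 * L ^ 2 * β₁ ^ 2 / (2 * ε * (1 - β₁) ^ 2)) * (1 / lam₁ ^ 2 + 1 / lam₂ ^ 2)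
          * ((d : ℝ) * G ^ 2 / ε ^ 2)
        + (γ ^ 3 * L ^ 2 * β₁ ^ 2 / (2 * ε * (1 - β₁) ^ 2)) * (1 / lam₃ ^ 2)
          * ((d : ℝ) * G ^ 2 / ε ^ 2) := by ring
  have hsplit2 : (γ * L ^ 2 * ρ ^ 2 / (2 * ε)) * (lam₂ ^ 2 + 4 * lam₃ ^ 2)
      = (γ * L ^ 2 * ρ ^ 2 / (2 * ε)) * lam₂ ^ 2
        + (γ * L ^ 2 * ρ ^ 2 / (2 * ε)) * (4 * lam₃ ^ 2) := by ring
  rw [hsplit1, hsplit2]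
  calc ∑ j, -γ * (Δ j * (g j * η j))
      ≤ γ * ((1 / (2 * lam₁ ^ 2) + 1 / (2 * lam₂ ^ 2)) * A + (lam₁ ^ 2 / 2) * P
          + (lam₂ ^ 2 / 2) * W) := hsum_le
    _ = γ * ((1 / (2 * lam₁ ^ 2) + 1 / (2 * lam₂ ^ 2)) * A) + γ * ((lam₁ ^ 2 / 2) * P)
          + γ * ((lam₂ ^ 2 / 2) * W) := by ring
    _ ≤ _ := by
        rw [hmid]
        linarith [t1, t2, t3, t4]
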